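/- Let μ ≤_cx ν with ν atomless, and let f, g : ℝ → ℝ be strictly convex. Then for any coupling (X, Y) ∈ Π(μ, ν), E[f(E[Y|X] − X) − g(E[X|Y])] ≥ f(0) − E[g(X)], with equality if and only if (X, Y) is a backward Monge martingale transport, i.e., E[Y|X] = X almost surely and X is σ(Y)-measurable. -/

import Mathlib

open MeasureTheory ProbabilityTheory Filter Topology

noncomputable section

/-- Convex order on measures on ℝ. -/
def ConvexOrder (μ ν : Measure ℝ) : Prop :=
  ∀ φ : ℝ → ℝ, ConvexOn ℝ Set.univ φ → Integrable φ μ → Integrable φ ν →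
    ∫ x, φ x ∂μ ≤ ∫ x, φ x ∂ν

/-- Extended convex order (nonnegative convex test functions). -/
def ExtConvexOrder (μ ν : Measure ℝ) : Prop :=
  ∀ φ : ℝ → ℝ, ConvexOn ℝ Set.univ φ → (∀ x, 0 ≤ φ x) → Integrable φ μ → Integrable φ ν →
    ∫ x, φ x ∂μ ≤ ∫ x, φ x ∂ν

/-- π is a coupling of μ and ν. -/
def IsCoupling (π : Measure (ℝ × ℝ)) (μ ν : Measure ℝ) : Prop :=
  π.map Prod.fst = μ ∧ π.map Prod.snd = ν

/-- π is a martingale coupling: a coupling with E[Y|X] = X. -/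
def IsMartingaleCoupling (π : Measure (ℝ × ℝ)) (μ ν : Measure ℝ) : Prop :=
  IsCoupling π μ ν ∧
  ∀ A : Set ℝ, MeasurableSet A →
    ∫ p in (A ×ˢ (Set.univ : Set ℝ)), p.2 ∂π = ∫ p in (A ×ˢ (Set.univ : Set ℝ)), p.1 ∂π

/-- π is a backward Monge transport over the second marginal ν. -/
def IsBackwardMonge (π : Measure (ℝ × ℝ)) (ν : Measure ℝ) : Prop :=
  ∃ h : ℝ → ℝ, Measurable h ∧ π = ν.map (fun y => (h y, y))

/-- f is a backward Monge martingale transport map from ν to f_#ν: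
E[Y | f(Y)] = f(Y) where Y ∼ ν. -/
def IsBMMTMap (f : ℝ → ℝ) (ν : Measure ℝ) : Prop :=
  Measurable f ∧ ∀ A : Set ℝ, MeasurableSet A →
    ∫ y in f ⁻¹' A, y ∂ν = ∫ y in f ⁻¹' A, f y ∂ν

/-- μ ≤_MM ν : existence of a backward Monge martingale transport from μ to ν. -/
def leMM (μ ν : Measure ℝ) : Prop := ∃ f : ℝ → ℝ, IsBMMTMap f ν ∧ ν.map f = μ

/-- θ is the shadow of μ in ν: the ≤_cx-minimal measure θ with μ ≤_cx θ ≤ ν. -/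
def IsShadow (ν μ θ : Measure ℝ) : Prop :=
  ConvexOrder μ θ ∧ θ ≤ ν ∧
    ∀ θ' : Measure ℝ, ConvexOrder μ θ' → θ' ≤ ν → ConvexOrder θ θ'

end

open Set

noncomputable def subgrad (f : ℝ → ℝ) (a : ℝ) : ℝ :=
  sInf ((fun x => (f x - f a) / (x - a)) '' Set.Ioi a)

theorem subgrad_spec {f : ℝ → ℝ} (hf : StrictConvexOn ℝ Set.univ f) (a x : ℝ) :
    f a + subgrad f a * (x - a) ≤ f x ∧ (x ≠ a → f a + subgrad f a * (x - a) < f x) := by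
  set s : ℝ → ℝ := fun x => (f x - f a) / (x - a) with hs
  have hmono : ∀ {u v : ℝ}, u ≠ a → v ≠ a → u < v → s u < s v := fun hu hv huv =>
    hf.secant_strict_mono (mem_univ a) (mem_univ _) (mem_univ _) hu hv huv
  have hbdd : BddBelow (s '' Set.Ioi a) := by
    refine ⟨s (a - 1), ?_⟩
    rintro _ ⟨z, hz, rfl⟩
    have hz' : a < z := hz
    exact (hmono (by linarith) (ne_of_gt hz') (by linarith)).le
  have hne : (s '' Set.Ioi a).Nonempty :=
    ⟨s (a + 1), mem_image_of_mem _ (by simp only [Set.mem_Ioi]; linarith)⟩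
  have claim1 : ∀ z, a < z → subgrad f a < s z := by
    intro z hz
    have h1 : subgrad f a ≤ s ((a + z) / 2) :=
      csInf_le hbdd (mem_image_of_mem _ (by simp only [Set.mem_Ioi]; linarith))
    have h2 : s ((a + z) / 2) < s z := hmono (by intro h; rw [← h] at hz; linarith [hz])
      (ne_of_gt hz) (by linarith)
    linarith
  have claim2 : ∀ z, z < a → s z < subgrad f a := by
    intro z hz
    have h1 : s z < s ((z + a) / 2) := hmono (ne_of_lt hz) (by intro h; linarith [h.ge]; ) (by linarith)
    have h2 : s ((z + a) / 2) ≤ subgrad f a := by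
      refine le_csInf hne ?_
      rintro _ ⟨w, hw, rfl⟩
      exact (hmono (by intro h; linarith [h.ge]) (ne_of_gt hw) (by simp at hw; linarith)).le
    linarith
  rcases lt_trichotomy x a with h | h | h
  · have h1 : s x < subgrad f a := claim2 x h
    have hxa : x - a < 0 := by linarith
    have h2 : subgrad f a * (x - a) < s x * (x - a) := by
      exact mul_lt_mul_of_neg_right h1 hxa
    have h3 : s x * (x - a) = f x - f a := div_mul_cancel₀ _ (sub_ne_zero.mpr h.ne)
    constructor
    · nlinarith
    · intro _; nlinarith
  · subst h; simp
  · have h1 : subgrad f a < s x := claim1 x h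
    have hxa : 0 < x - a := by linarith
    have h2 : subgrad f a * (x - a) < s x * (x - a) := by
      exact mul_lt_mul_of_pos_right h1 hxa
    have h3 : s x * (x - a) = f x - f a := div_mul_cancel₀ _ (sub_ne_zero.mpr h.ne')
    constructor
    · nlinarith
    · intro _; nlinarith

theorem subgrad_mono {f : ℝ → ℝ} (hf : StrictConvexOn ℝ Set.univ f) : Monotone (subgrad f) := by
  intro a b hab
  rcases eq_or_lt_of_le hab with rfl | h
  · exact le_rfl
  have h1 := (subgrad_spec hf a b).2 (ne_of_gt h)
  have h2 := (subgrad_spec hf b a).2 (ne_of_lt h)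
  nlinarith

theorem doob_dynkin {Ω : Type*} {Y φ : Ω → ℝ}
    (hφ : Measurable[MeasurableSpace.comap Y (inferInstance : MeasurableSpace ℝ)] φ) :
    ∃ h : ℝ → ℝ, Measurable h ∧ ∀ ω, φ ω = h (Y ω) := by
  have hA : ∀ q : ℚ, ∃ B : Set ℝ, MeasurableSet B ∧ Y ⁻¹' B = {ω | φ ω ≤ (q : ℝ)} := by
    intro q
    exact MeasurableSpace.measurableSet_comap.mp (hφ measurableSet_Iic)
  classical
  choose B hBmeas hBeq using hA
  set F : ℝ → EReal := fun y => ⨅ q : ℚ, (if y ∈ B q then (((q : ℝ) : EReal)) else ⊤) with hF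
  have hFmeas : Measurable F := by
    refine Measurable.iInf fun q => Measurable.ite (hBmeas q) measurable_const measurable_const
  refine ⟨fun y => (F y).toReal, hFmeas.ereal_toReal, fun ω => ?_⟩
  have hmem : ∀ q : ℚ, Y ω ∈ B q ↔ φ ω ≤ (q : ℝ) := by
    intro q
    constructor
    · intro hy; have : ω ∈ Y ⁻¹' B q := hy; rw [hBeq q] at this; exact this
    · intro hle; have : ω ∈ {ω | φ ω ≤ (q : ℝ)} := hle; rw [← hBeq q] at this; exact this
  have hkey : F (Y ω) = ((φ ω : ℝ) : EReal) := by
    rw [hF]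
    refine le_antisymm ?_ (le_iInf fun q => ?_)
    · by_contra hlt
      push_neg at hlt
      obtain ⟨q, hq1, hq2⟩ := EReal.lt_iff_exists_rat_btwn.mp hlt
      have hqle : φ ω ≤ (q : ℝ) := by exact_mod_cast hq1.le
      have : (⨅ q : ℚ, (if Y ω ∈ B q then (((q : ℝ) : EReal)) else ⊤)) ≤ ((q : ℝ) : EReal) := by
        refine iInf_le_of_le q ?_
        rw [if_pos ((hmem q).mpr hqle)]
      exact absurd (this.trans_lt hq2) (lt_irrefl _)
    · split_ifs with hq
      · exact_mod_cast (hmem q).mp hq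
      · exact le_top
  simp [hkey]


open MeasureTheory in
theorem stmt10 {Ω : Type*} [m0 : MeasurableSpace Ω] (P : Measure Ω) [IsProbabilityMeasure P]
    (μ ν : Measure ℝ) [IsProbabilityMeasure μ] [IsProbabilityMeasure ν]
    (hcx : ConvexOrder μ ν) (hatomless : ∀ y : ℝ, ν {y} = 0)
    (f g : ℝ → ℝ) (hf : StrictConvexOn ℝ Set.univ f) (hg : StrictConvexOn ℝ Set.univ g)
    (X Y : Ω → ℝ) (hX : Measurable X) (hY : Measurable Y)
    (hlawX : P.map X = μ) (hlawY : P.map Y = ν)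
    (hXi : Integrable X P) (hYi : Integrable Y P)
    (h1 : Integrable (fun ω => f ((P[Y|MeasurableSpace.comap X inferInstance]) ω - X ω)) P)
    (h2 : Integrable (fun ω => g ((P[X|MeasurableSpace.comap Y inferInstance]) ω)) P)
    (h3 : Integrable (fun ω => g (X ω)) P) :
    (f 0 - ∫ ω, g (X ω) ∂P ≤
      ∫ ω, (f ((P[Y|MeasurableSpace.comap X inferInstance]) ω - X ω)
            - g ((P[X|MeasurableSpace.comap Y inferInstance]) ω)) ∂P) ∧
    ((∫ ω, (f ((P[Y|MeasurableSpace.comap X inferInstance]) ω - X ω)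
            - g ((P[X|MeasurableSpace.comap Y inferInstance]) ω)) ∂P
        = f 0 - ∫ ω, g (X ω) ∂P) ↔
      ((P[Y|MeasurableSpace.comap X inferInstance]) =ᵐ[P] X ∧
       ∃ h : ℝ → ℝ, Measurable h ∧ X =ᵐ[P] fun ω => h (Y ω))) := by
  classical
  have hm1 : MeasurableSpace.comap X (inferInstance : MeasurableSpace ℝ) ≤ m0 := hX.comap_le
  have hm2 : MeasurableSpace.comap Y (inferInstance : MeasurableSpace ℝ) ≤ m0 := hY.comap_le
  haveI hsf1 : SigmaFinite (P.trim hm1) := by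
    haveI := isFiniteMeasure_trim (μ := P) hm1; infer_instance
  haveI hsf2 : SigmaFinite (P.trim hm2) := by
    haveI := isFiniteMeasure_trim (μ := P) hm2; infer_instance
  set N := P[Y|MeasurableSpace.comap X (inferInstance : MeasurableSpace ℝ)] with hNdef
  set M := P[X|MeasurableSpace.comap Y (inferInstance : MeasurableSpace ℝ)] with hMdef
  -- means are equal
  have hmean : ∫ ω, X ω ∂P = ∫ ω, Y ω ∂P := by
    have hid : Integrable (id : ℝ → ℝ) μ := by
      rw [← hlawX, integrable_map_measure aestronglyMeasurable_id hX.aemeasurable]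
      exact hXi
    have hid' : Integrable (id : ℝ → ℝ) ν := by
      rw [← hlawY, integrable_map_measure aestronglyMeasurable_id hY.aemeasurable]
      exact hYi
    have hconv : ConvexOn ℝ Set.univ (id : ℝ → ℝ) := convexOn_id convex_univ
    have hconcv : ConvexOn ℝ Set.univ (fun x : ℝ => -x) :=
      ⟨convex_univ, fun x _ y _ a b _ _ _ => by
        simp only [smul_eq_mul]; exact le_of_eq (by ring)⟩
    have ha : ∫ x, id x ∂μ ≤ ∫ x, id x ∂ν := hcx id hconv hid hid'
    have hidnegμ : Integrable (fun x : ℝ => -x) μ := hid.neg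
    have hidnegν : Integrable (fun x : ℝ => -x) ν := hid'.neg
    have hb : ∫ x, -(id x) ∂μ ≤ ∫ x, -(id x) ∂ν := hcx _ hconcv hidnegμ hidnegν
    rw [integral_neg, integral_neg] at hb
    have e1 : ∫ x, id x ∂μ = ∫ ω, X ω ∂P := by
      rw [← hlawX]; exact integral_map hX.aemeasurable aestronglyMeasurable_id
    have e2 : ∫ x, id x ∂ν = ∫ ω, Y ω ∂P := by
      rw [← hlawY]; exact integral_map hY.aemeasurable aestronglyMeasurable_id
    rw [e1, e2] at ha hb
    linarith
  ------------------------------------------------------------------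
  -- f part
  ------------------------------------------------------------------
  set c0 := subgrad f 0 with hc0
  set Z : Ω → ℝ := fun ω => N ω - X ω with hZdef
  have hNint : Integrable N P := integrable_condExp
  have hZint : Integrable Z P := hNint.sub hXi
  have hZmean : ∫ ω, Z ω ∂P = 0 := by
    rw [hZdef]
    rw [integral_sub hNint hXi, hNdef, integral_condExp hm1, ← hmean, sub_self]
  set Df : Ω → ℝ := fun ω => f (Z ω) - f 0 - c0 * Z ω with hDfdef
  have hDf0 : ∀ ω, 0 ≤ Df ω := fun ω => by
    have h := (subgrad_spec hf 0 (Z ω)).1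
    simp only [sub_zero] at h
    simp only [hDfdef]; linarith
  have hfZi : Integrable (fun ω => f (Z ω)) P := h1
  have hDfint : Integrable Df P :=
    (hfZi.sub (integrable_const (f 0))).sub (hZint.const_mul c0)
  have hDfeq : ∫ ω, Df ω ∂P = ∫ ω, f (Z ω) ∂P - f 0 := by
    have t1 : ∫ ω, Df ω ∂P
        = ∫ ω, (f (Z ω) - f 0) ∂P - ∫ ω, c0 * Z ω ∂P :=
      integral_sub (hfZi.sub (integrable_const _)) (hZint.const_mul c0)
    have t2 : ∫ ω, (f (Z ω) - f 0) ∂P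
        = ∫ ω, f (Z ω) ∂P - ∫ (_ : Ω), f 0 ∂P :=
      integral_sub hfZi (integrable_const _)
    have t3 : ∫ ω, c0 * Z ω ∂P = c0 * ∫ ω, Z ω ∂P := integral_const_mul _ _
    have t4 : ∫ (_ : Ω), f 0 ∂P = f 0 := by simp
    rw [t1, t2, t3, t4, hZmean, mul_zero, sub_zero]
  have hfZ_ge : f 0 ≤ ∫ ω, f (Z ω) ∂P := by
    have h := integral_nonneg (μ := P) (f := Df) hDf0
    rw [hDfeq] at h; linarith
  have hfZ_eq : ∫ ω, f (Z ω) ∂P = f 0 ↔ Z =ᵐ[P] fun _ => (0:ℝ) := by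
    constructor
    · intro h
      have h0 : ∫ ω, Df ω ∂P = 0 := by rw [hDfeq, h, sub_self]
      have := (integral_eq_zero_iff_of_nonneg hDf0 hDfint).mp h0
      filter_upwards [this] with ω hω
      by_contra hne
      have := (subgrad_spec hf 0 (Z ω)).2 hne
      simp only [sub_zero] at this
      have : 0 < Df ω := by simp only [hDfdef]; linarith
      simp only [Pi.zero_apply] at hω
      linarith [hω ▸ this]
    · intro h
      have : (fun ω => f (Z ω)) =ᵐ[P] fun _ => f 0 := by
        filter_upwards [h] with ω hω; rw [hω]
      rw [integral_congr_ae this]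
      simp
  ------------------------------------------------------------------
  -- g part
  ------------------------------------------------------------------
  set c := subgrad g with hcdef
  have hcmono : Monotone c := subgrad_mono hg
  have hcmeas : Measurable c := hcmono.measurable
  have hMsm : StronglyMeasurable[(MeasurableSpace.comap Y (inferInstance : MeasurableSpace ℝ))] M := stronglyMeasurable_condExp
  have hMmeas2 : Measurable[(MeasurableSpace.comap Y (inferInstance : MeasurableSpace ℝ))] M := hMsm.measurable
  have hMint : Integrable M P := integrable_condExp
  have hgM : Integrable (fun ω => g (M ω)) P := h2
  set A : ℕ → Set Ω := fun n => M ⁻¹' (Set.Icc (-(n:ℝ)) n) with hAdef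
  have hAm2 : ∀ n, MeasurableSet[(MeasurableSpace.comap Y (inferInstance : MeasurableSpace ℝ))] (A n) := fun n => hMmeas2 measurableSet_Icc
  have hAm : ∀ n, MeasurableSet[m0] (A n) := fun n => hm2 _ (hAm2 n)
  have hAsub : ∀ {n m : ℕ}, n ≤ m → A n ⊆ A m := by
    intro n m h
    exact Set.preimage_mono (Set.Icc_subset_Icc (by push_cast; simp; exact_mod_cast h)
      (by exact_mod_cast h))
  have hAcover : ∀ ω, ∃ n : ℕ, ∀ k, n ≤ k → ω ∈ A k := by
    intro ω
    obtain ⟨n, hn⟩ := exists_nat_ge |M ω|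
    refine ⟨n, fun k hk => ?_⟩
    have : |M ω| ≤ (k : ℝ) := hn.trans (by exact_mod_cast hk)
    rw [abs_le] at this
    exact ⟨this.1, this.2⟩
  set W : ℕ → Ω → ℝ := fun n => (A n).indicator (fun ω => c (M ω)) with hWdef
  have hWsm : ∀ n, StronglyMeasurable[(MeasurableSpace.comap Y (inferInstance : MeasurableSpace ℝ))] (W n) := fun n =>
    ((hcmeas.comp hMmeas2).indicator (hAm2 n)).stronglyMeasurable
  have hWbd : ∀ n ω, ‖W n ω‖ ≤ max ‖c (-(n:ℝ))‖ ‖c (n:ℝ)‖ := by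
    intro n ω
    by_cases hω : ω ∈ A n
    · rw [hWdef]
      simp only [Set.indicator_of_mem hω, Real.norm_eq_abs]
      exact (abs_le_max_abs_abs (hcmono hω.1) (hcmono hω.2)).trans
        (by simp [Real.norm_eq_abs])
    · rw [hWdef]
      simp only [Set.indicator_of_notMem hω, norm_zero]
      positivity
  have hWX : ∀ n, Integrable (fun ω => W n ω * X ω) P := fun n =>
    hXi.bdd_mul (((hWsm n).mono hm2).aestronglyMeasurable) (Eventually.of_forall (hWbd n))
  have hWM : ∀ n, Integrable (fun ω => W n ω * M ω) P := fun n =>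
    hMint.bdd_mul (((hWsm n).mono hm2).aestronglyMeasurable) (Eventually.of_forall (hWbd n))
  have hWXM : ∀ n, Integrable (fun ω => W n ω * (X ω - M ω)) P := by
    intro n
    have : (fun ω => W n ω * (X ω - M ω)) = fun ω => W n ω * X ω - W n ω * M ω := by
      funext ω; ring
    rw [this]; exact (hWX n).sub (hWM n)
  have horth : ∀ n, ∫ ω, W n ω * (X ω - M ω) ∂P = 0 := by
    intro n
    have hpull : P[(fun ω => W n ω * X ω)|(MeasurableSpace.comap Y (inferInstance : MeasurableSpace ℝ))] =ᵐ[P] fun ω => W n ω * M ω := by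
      have h := condExp_stronglyMeasurable_mul_of_bound hm2 (hWsm n) hXi
        (max ‖c (-(n:ℝ))‖ ‖c (n:ℝ)‖) (Eventually.of_forall (hWbd n))
      exact h
    have e1 : ∫ ω, W n ω * X ω ∂P = ∫ ω, (P[(fun ω => W n ω * X ω)|(MeasurableSpace.comap Y (inferInstance : MeasurableSpace ℝ))]) ω ∂P :=
      (integral_condExp hm2).symm
    have e2 : ∫ ω, (P[(fun ω => W n ω * X ω)|(MeasurableSpace.comap Y (inferInstance : MeasurableSpace ℝ))]) ω ∂P = ∫ ω, W n ω * M ω ∂P :=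
      integral_congr_ae hpull
    have e3 : ∫ ω, W n ω * (X ω - M ω) ∂P
        = ∫ ω, W n ω * X ω ∂P - ∫ ω, W n ω * M ω ∂P := by
      rw [← integral_sub (hWX n) (hWM n)]
      congr 1; funext ω; ring
    rw [e3, e1, e2, sub_self]
  set Dg : Ω → ℝ := fun ω => g (X ω) - g (M ω) - c (M ω) * (X ω - M ω) with hDgdef
  have hDg0 : ∀ ω, 0 ≤ Dg ω := fun ω => by
    have h := (subgrad_spec hg (M ω) (X ω)).1
    simp only [hDgdef]; linarith
  have hDgstrict : ∀ ω, Dg ω = 0 → X ω = M ω := by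
    intro ω h
    by_contra hne
    have := (subgrad_spec hg (M ω) (X ω)).2 hne
    simp only [hDgdef] at h
    linarith
  set GXM : Ω → ℝ := fun ω => g (X ω) - g (M ω) with hGXMdef
  have hGXMi : Integrable GXM P := h3.sub hgM
  have hident : ∀ n ω, (A n).indicator Dg ω = (A n).indicator GXM ω - W n ω * (X ω - M ω) := by
    intro n ω
    by_cases hω : ω ∈ A n
    · simp only [Set.indicator_of_mem hω, hWdef, hDgdef, hGXMdef]
      try ring
    · simp [hWdef, Set.indicator_of_notMem hω]
  have hindint : ∀ n, Integrable ((A n).indicator Dg) P := by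
    intro n
    have : (A n).indicator Dg = fun ω => (A n).indicator GXM ω - W n ω * (X ω - M ω) := by
      funext ω; exact hident n ω
    rw [this]
    exact (hGXMi.indicator (hAm n)).sub (hWXM n)
  set In : ℕ → ℝ := fun n => ∫ ω, (A n).indicator Dg ω ∂P with hIndef
  have hIn_eq : ∀ n, In n = ∫ ω, (A n).indicator GXM ω ∂P := by
    intro n
    rw [hIndef]
    simp only [hident]
    rw [integral_sub (hGXMi.indicator (hAm n)) (hWXM n), horth n, sub_zero]
  have hIn_nonneg : ∀ n, 0 ≤ In n := fun n =>
    integral_nonneg (μ := P) (Set.indicator_nonneg (fun ω _ => hDg0 ω))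
  have hIn_mono : Monotone In := by
    intro n m h
    refine integral_mono (hindint n) (hindint m) ?_
    intro ω
    exact Set.indicator_le_indicator_of_subset (hAsub h) (fun ω => hDg0 ω) ω
  have htendsto : Tendsto In atTop (𝓝 (∫ ω, GXM ω ∂P)) := by
    have := tendsto_integral_of_dominated_convergence (fun ω => |GXM ω|)
      (F := fun n => (A n).indicator GXM) (f := GXM)
      (fun n => (hGXMi.indicator (hAm n)).aestronglyMeasurable)
      hGXMi.abs
      (fun n => Eventually.of_forall fun ω => by
        by_cases hω : ω ∈ A n
        · simp [Set.indicator_of_mem hω, Real.norm_eq_abs]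
        · simp [Set.indicator_of_notMem hω])
      (Eventually.of_forall fun ω => by
        obtain ⟨n0, hn0⟩ := hAcover ω
        refine tendsto_atTop_of_eventually_const (i₀ := n0) fun k hk => ?_
        show (A k).indicator GXM ω = GXM ω
        exact Set.indicator_of_mem (hn0 k hk) _)
    have heq : In = fun n => ∫ ω, (A n).indicator GXM ω ∂P := funext hIn_eq
    rw [heq]
    exact this
  have hGXM_int_eq : ∫ ω, GXM ω ∂P = ∫ ω, g (X ω) ∂P - ∫ ω, g (M ω) ∂P := by
    rw [hGXMdef]; exact integral_sub h3 hgM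
  have hgle : ∫ ω, g (M ω) ∂P ≤ ∫ ω, g (X ω) ∂P := by
    have h0 : (0:ℝ) ≤ ∫ ω, GXM ω ∂P :=
      ge_of_tendsto htendsto (Eventually.of_forall hIn_nonneg)
    rw [hGXM_int_eq] at h0; linarith
  have hgeq : ∫ ω, g (X ω) ∂P = ∫ ω, g (M ω) ∂P → X =ᵐ[P] M := by
    intro heq
    have hlim0 : Tendsto In atTop (𝓝 0) := by
      rw [hGXM_int_eq, heq, sub_self] at htendsto; exact htendsto
    have hInle : ∀ n, In n ≤ 0 := fun n => hIn_mono.ge_of_tendsto hlim0 n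
    have hIn0 : ∀ n, In n = 0 := fun n => le_antisymm (hInle n) (hIn_nonneg n)
    have hae : ∀ n : ℕ, (A n).indicator Dg =ᵐ[P] 0 := by
      intro n
      exact (integral_eq_zero_iff_of_nonneg
        (fun ω => Set.indicator_nonneg (fun ω _ => hDg0 ω) ω) (hindint n)).mp (hIn0 n)
    have hall : ∀ᵐ ω ∂P, ∀ n : ℕ, (A n).indicator Dg ω = 0 := by
      rw [ae_all_iff]; intro n; exact hae n
    filter_upwards [hall] with ω hω
    obtain ⟨n0, hn0⟩ := hAcover ω
    have := hω n0
    rw [Set.indicator_of_mem (hn0 n0 le_rfl)] at this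
    exact hDgstrict ω this
  have hgfac : (∃ h : ℝ → ℝ, Measurable h ∧ X =ᵐ[P] fun ω => h (Y ω)) →
      ∫ ω, g (X ω) ∂P = ∫ ω, g (M ω) ∂P := by
    rintro ⟨h, hh, hXh⟩
    have hWsm' : StronglyMeasurable[(MeasurableSpace.comap Y (inferInstance : MeasurableSpace ℝ))] (fun ω => h (Y ω)) :=
      (hh.comp (comap_measurable Y)).stronglyMeasurable
    have hWint : Integrable (fun ω => h (Y ω)) P := hXi.congr hXh
    have hMX : M =ᵐ[P] X := by
      have e1 : M =ᵐ[P] P[(fun ω => h (Y ω))|(MeasurableSpace.comap Y (inferInstance : MeasurableSpace ℝ))] := condExp_congr_ae hXh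
      have e2 : P[(fun ω => h (Y ω))|(MeasurableSpace.comap Y (inferInstance : MeasurableSpace ℝ))] = fun ω => h (Y ω) :=
        condExp_of_stronglyMeasurable hm2 hWsm' hWint
      have e2' : P[(fun ω => h (Y ω))|(MeasurableSpace.comap Y (inferInstance : MeasurableSpace ℝ))] =ᵐ[P] fun ω => h (Y ω) := by
        rw [e2]
      exact (e1.trans e2').trans hXh.symm
    refine integral_congr_ae ?_
    filter_upwards [hMX] with ω hω
    rw [hω]
  ------------------------------------------------------------------
  -- assembly
  ------------------------------------------------------------------
  have hsplit : ∫ ω, (f (N ω - X ω) - g (M ω)) ∂P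
      = ∫ ω, f (Z ω) ∂P - ∫ ω, g (M ω) ∂P := integral_sub h1 h2
  constructor
  · rw [hsplit]; linarith
  · rw [hsplit]
    constructor
    · intro heq
      have ha : ∫ ω, f (Z ω) ∂P = f 0 := by linarith
      have hb : ∫ ω, g (X ω) ∂P = ∫ ω, g (M ω) ∂P := by linarith
      refine ⟨?_, ?_⟩
      · have hZ0 := hfZ_eq.mp ha
        filter_upwards [hZ0] with ω hω
        have : N ω - X ω = 0 := hω
        linarith
      · have hXM := hgeq hb
        obtain ⟨h, hh, hMh⟩ := doob_dynkin (Y := Y) (φ := M) hMmeas2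
        exact ⟨h, hh, hXM.trans (Eventually.of_forall fun ω => hMh ω)⟩
    · rintro ⟨hNX, hfac⟩
      have ha : ∫ ω, f (Z ω) ∂P = f 0 := by
        refine hfZ_eq.mpr ?_
        filter_upwards [hNX] with ω hω
        simp only [hZdef, hω, sub_self]
      have hb := hgfac hfac
      linarith
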